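/- Having an atomic arity implies strong normalization for extended reduction: if AAA L T A, then T is strongly normalizing in L with respect to extended parallel reduction, i.e., every sequence of non-identity extended parallel reduction steps starting at T in L is finite. -/

import Mathlib

inductive Bk | abbr | abst
deriving DecidableEq

inductive Fk | appl | cast
deriving DecidableEq

inductive Tm
| sort : Nat → Tm
| lref : Nat → Tm
| bind : Bk → Tm → Tm → Tm
| flat : Fk → Tm → Tm → Tm
deriving DecidableEq

inductive Lift : Nat → Nat → Tm → Tm → Prop
| sort (l m k) : Lift l m (.sort k) (.sort k)
| lt {l m i} : i < l → Lift l m (.lref i) (.lref i)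
| ge {l m i} : l ≤ i → Lift l m (.lref i) (.lref (i + m))
| bind {l m b W₁ W₂ T₁ T₂} : Lift l m W₁ W₂ → Lift (l + 1) m T₁ T₂ →
    Lift l m (.bind b W₁ T₁) (.bind b W₂ T₂)
| flat {l m f V₁ V₂ T₁ T₂} : Lift l m V₁ V₂ → Lift l m T₁ T₂ →
    Lift l m (.flat f V₁ T₁) (.flat f V₂ T₂)

inductive Env
| null : Env
| pair : Env → Bk → Tm → Env
deriving DecidableEq

inductive Drop : Nat → Nat → Env → Env → Prop
| atom (l) : Drop l 0 .null .null
| pair {L₁ L₂ b W} : Drop 0 0 L₁ L₂ → Drop 0 0 (.pair L₁ b W) (.pair L₂ b W)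
| drop {m L₁ L₂ b W} : Drop 0 m L₁ L₂ → Drop 0 (m + 1) (.pair L₁ b W) L₂
| skip {l m L₁ L₂ b W₁ W₂} : Drop l m L₁ L₂ → Lift l m W₂ W₁ →
    Drop (l + 1) m (.pair L₁ b W₁) (.pair L₂ b W₂)

inductive Aa | star | impl : Aa → Aa → Aa
deriving DecidableEq

inductive Aaa : Env → Tm → Aa → Prop
| sort {L k} : Aaa L (.sort k) .star
| lref {L K b W B i} : Drop 0 i L (.pair K b W) → Aaa K W B → Aaa L (.lref i) B
| abbr {L V T B A} : Aaa L V B → Aaa (.pair L .abbr V) T A →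
    Aaa L (.bind .abbr V T) A
| abst {L W T B A} : Aaa L W B → Aaa (.pair L .abst W) T A →
    Aaa L (.bind .abst W T) (.impl B A)
| appl {L V T B A} : Aaa L V B → Aaa L T (.impl B A) → Aaa L (.flat .appl V T) A
| cast {L U T A} : Aaa L U A → Aaa L T A → Aaa L (.flat .cast U T) A

inductive Cpx (h g : Nat → Nat) : Env → Tm → Tm → Prop
| sort {L k} : Cpx h g L (.sort k) (.sort k)
| lref {L i} : Cpx h g L (.lref i) (.lref i)
| st {L k d} : g k = d + 1 → Cpx h g L (.sort k) (.sort (h k))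
| bind {L b W₁ W₂ T₁ T₂} : Cpx h g L W₁ W₂ → Cpx h g (.pair L b W₁) T₁ T₂ →
    Cpx h g L (.bind b W₁ T₁) (.bind b W₂ T₂)
| flat {L f V₁ V₂ T₁ T₂} : Cpx h g L V₁ V₂ → Cpx h g L T₁ T₂ →
    Cpx h g L (.flat f V₁ T₁) (.flat f V₂ T₂)
| delta {L K b W₁ W₂ V₂ i} : Drop 0 i L (.pair K b W₁) → Cpx h g K W₁ W₂ →
    Lift 0 (i + 1) W₂ V₂ → Cpx h g L (.lref i) V₂
| beta {L V₁ V₂ W₁ W₂ T₁ T₂} : Cpx h g L V₁ V₂ → Cpx h g L W₁ W₂ →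
    Cpx h g (.pair L .abst W₁) T₁ T₂ →
    Cpx h g L (.flat .appl V₁ (.bind .abst W₁ T₁))
      (.bind .abbr (.flat .cast W₂ V₂) T₂)
| zeta {L V U₁ U₂ T₂} : Cpx h g (.pair L .abbr V) U₁ U₂ → Lift 0 1 T₂ U₂ →
    Cpx h g L (.bind .abbr V U₁) T₂
| eps {L U T₁ T₂} : Cpx h g L T₁ T₂ → Cpx h g L (.flat .cast U T₁) T₂
| ee {L U₁ U₂ T} : Cpx h g L U₁ U₂ → Cpx h g L (.flat .cast U₁ T) U₂
| theta {L V₁ V₂ W₂ U₁ U₂ T₁ T₂} : Cpx h g L V₁ V₂ → Lift 0 1 V₂ W₂ →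
    Cpx h g L U₁ U₂ → Cpx h g (.pair L .abbr U₁) T₁ T₂ →
    Cpx h g L (.flat .appl V₁ (.bind .abbr U₁ T₁))
      (.bind .abbr U₂ (.flat .appl W₂ T₂))

inductive Lpx (h g : Nat → Nat) : Env → Env → Prop
| atom : Lpx h g .null .null
| pair {L₁ L₂ b W₁ W₂} : Lpx h g L₁ L₂ → Cpx h g L₁ W₁ W₂ →
    Lpx h g (.pair L₁ b W₁) (.pair L₂ b W₂)

inductive Csx (h g : Nat → Nat) (L : Env) : Tm → Prop
| intro {T₁} : (∀ T₂, Cpx h g L T₁ T₂ → T₁ ≠ T₂ → Csx h g L T₂) → Csx h g L T₁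

namespace SNproof

/-- functional lift -/
def liftT (l m : Nat) : Tm → Tm
| .sort k => .sort k
| .lref i => .lref (if i < l then i else i + m)
| .bind b W T => .bind b (liftT l m W) (liftT (l+1) m T)
| .flat f V T => .flat f (liftT l m V) (liftT l m T)

theorem liftT_lift (l m : Nat) (T : Tm) : Lift l m T (liftT l m T) := by
  induction T generalizing l with
  | sort k => exact .sort l m k
  | lref i =>
    by_cases hi : i < l
    · simpa [liftT, hi] using Lift.lt hi
    · simpa [liftT, hi] using Lift.ge (Nat.le_of_not_lt hi)
  | bind b W T ihW ihT => exact .bind (ihW l) (ihT (l+1))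
  | flat f V T ihV ihT => exact .flat (ihV l) (ihT l)

theorem lift_eq {l m : Nat} {T U : Tm} (h : Lift l m T U) : U = liftT l m T := by
  induction h with
  | sort => rfl
  | lt hi => simp [liftT, hi]
  | ge hi => simp [liftT, Nat.not_lt.mpr hi]
  | bind _ _ ihW ihT => simp [liftT, ihW, ihT]
  | flat _ _ ihV ihT => simp [liftT, ihV, ihT]

theorem lift_iff {l m : Nat} {T U : Tm} : Lift l m T U ↔ U = liftT l m T :=
  ⟨lift_eq, fun h => h ▸ liftT_lift l m T⟩

theorem liftT_zero (l : Nat) (T : Tm) : liftT l 0 T = T := by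
  induction T generalizing l <;> simp [liftT, *]

theorem liftT_inj {l m : Nat} {T₁ T₂ : Tm} (h : liftT l m T₁ = liftT l m T₂) : T₁ = T₂ := by
  induction T₁ generalizing T₂ l <;> cases T₂ <;> simp_all [liftT]
  case lref.lref i j => split_ifs at h <;> omega
  case bind.bind ihW ihT _ _ _ => exact ⟨ihW h.2.1, ihT h.2.2⟩
  case flat.flat ihV ihT _ _ _ => exact ⟨ihV h.2.1, ihT h.2.2⟩

/-- composition when l ≤ l' ≤ l + m -/
theorem liftT_liftT_le {l l' m m' : Nat} (h1 : l ≤ l') (h2 : l' ≤ l + m) (T : Tm) :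
    liftT l' m' (liftT l m T) = liftT l (m + m') T := by
  induction T generalizing l l' with
  | sort k => rfl
  | lref i =>
    simp only [liftT]
    split_ifs <;> simp <;> omega
  | bind b W T ihW ihT =>
    simp only [liftT]
    rw [ihW h1 h2, ihT (Nat.succ_le_succ h1) (by omega)]
  | flat f V T ihV ihT =>
    simp only [liftT]
    rw [ihV h1 h2, ihT h1 h2]

/-- commutation when l' ≤ l -/
theorem liftT_liftT_swap {l l' m m' : Nat} (h : l' ≤ l) (T : Tm) :
    liftT l' m' (liftT l m T) = liftT (l + m') m (liftT l' m' T) := by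
  induction T generalizing l l' with
  | sort k => rfl
  | lref i =>
    simp only [liftT]
    split_ifs <;> simp <;> omega
  | bind b W T ihW ihT =>
    simp only [liftT]
    rw [ihW h, ihT (Nat.succ_le_succ h), Nat.succ_add]
  | flat f V T ihV ihT =>
    simp only [liftT]
    rw [ihV h, ihT h]

/-- division: a low lift and a high lift factor through a common original -/
theorem lift_div {l₁ m₁ l₂ m₂ : Nat} (h : l₁ + m₁ ≤ l₂) {U S : Tm}
    (e : liftT l₁ m₁ U = liftT l₂ m₂ S) :
    ∃ T, U = liftT (l₂ - m₁) m₂ T ∧ S = liftT l₁ m₁ T := by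
  induction S generalizing U l₁ l₂ with
  | sort k =>
    cases U <;> simp [liftT] at e
    exact ⟨.sort k, by simp [liftT, e]⟩
  | lref i =>
    cases U <;> simp [liftT] at e
    case lref j =>
      by_cases hi : i < l₂
      · refine ⟨.lref j, ?_, ?_⟩ <;> simp only [liftT] <;>
          (split_ifs at e ⊢ <;> simp_all <;> omega)
      · refine ⟨.lref (i - m₁), ?_, ?_⟩ <;> simp only [liftT] <;>
          (split_ifs at e ⊢ <;> simp_all <;> omega)
  | bind b W T ihW ihT =>
    cases U <;> simp [liftT] at e
    case bind b' W' T' =>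
      obtain ⟨eb, eW, eT⟩ := e
      obtain ⟨Wt, hW1, hW2⟩ := ihW h eW
      obtain ⟨Tt, hT1, hT2⟩ := ihT (l₁ := l₁+1) (l₂ := l₂+1) (by omega) eT
      refine ⟨.bind b Wt Tt, ?_, ?_⟩ <;> simp [liftT, eb, hW1, hW2, hT1, hT2]
      rw [Nat.succ_sub (by omega)]
  | flat f V T ihV ihT =>
    cases U <;> simp [liftT] at e
    case flat f' V' T' =>
      obtain ⟨ef, eV, eT⟩ := e
      obtain ⟨Vt, hV1, hV2⟩ := ihV h eV
      obtain ⟨Tt, hT1, hT2⟩ := ihT h eT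
      exact ⟨.flat f Vt Tt, by simp [liftT, ef, hV1, hT1], by simp [liftT, hV2, hT2]⟩

def sz : Tm → Nat
| .sort _ => 1
| .lref _ => 1
| .bind _ W T => sz W + sz T + 1
| .flat _ V T => sz V + sz T + 1

theorem sz_liftT (l m : Nat) (T : Tm) : sz (liftT l m T) = sz T := by
  induction T generalizing l <;> simp [liftT, sz, *]

end SNproof
namespace SNproof

theorem drop00_eq {L₁ L₂ : Env} (h : Drop 0 0 L₁ L₂) : L₁ = L₂ := by
  induction L₁ generalizing L₂ with
  | null => cases h; rfl
  | pair L b W ih => cases h with | pair h => rw [ih h]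

theorem drop00_refl (L : Env) : Drop 0 0 L L := by
  induction L with
  | null => exact .atom 0
  | pair L b W ih => exact .pair ih

theorem drop0_succ {L K : Env} {b W i} (h : Drop 0 i L (.pair K b W)) :
    Drop 0 (i+1) L K := by
  induction L generalizing i with
  | null => cases h
  | pair L b' W' ih =>
    cases h with
    | pair h0 => cases drop00_eq h0; exact .drop (drop00_refl _)
    | drop h0 => exact .drop (ih h0)

theorem drop0_mono {i : Nat} {L X Y : Env} (h1 : Drop 0 i L X) (h2 : Drop 0 i L Y) : X = Y := by
  induction L generalizing i X Y with
  | null => cases h1; cases h2; rfl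
  | pair L b W ih =>
    cases h1 with
    | pair h1 =>
      cases h2 with
      | pair h2 => rw [← drop00_eq h1, ← drop00_eq h2]
    | drop h1 =>
      cases h2 with
      | drop h2 => exact ih h1 h2

/-- transfer a deep drop through a skipped prefix, outside the prefix -/
theorem drop_trans_ge {d l : Nat} {L0 L : Env} (h : Drop d l L0 L) :
    ∀ {i K}, Drop 0 i L K → d ≤ i → Drop 0 (i + l) L0 K := by
  induction h with
  | atom =>
    intro i K hi _
    cases hi
    exact .atom 0
  | pair h ih =>
    intro i K hi _
    cases drop00_eq h
    simpa using hi
  | drop h ih =>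
    intro i K hi hd
    exact .drop (ih hi hd)
  | @skip e l' L₁ L₂ b W₁ W₂ h hl ih =>
    intro i K hi hd
    cases hi with
    | drop hi => simpa [Nat.succ_add] using Drop.drop (ih hi (by omega))
    | pair h0 => omega

theorem drop_trans_ge_inv {d l : Nat} {L0 L : Env} (h : Drop d l L0 L) :
    ∀ {i K}, d ≤ i → Drop 0 (i + l) L0 K → Drop 0 i L K := by
  induction h with
  | atom =>
    intro i K _ hi
    cases hi
    exact .atom 0
  | pair h ih =>
    intro i K _ hi
    cases drop00_eq h
    simpa using hi
  | @drop m L₁ L₂ b W h ih =>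
    intro i K hd hi
    have : i + (m+1) = (i + m) + 1 := by omega
    rw [this] at hi
    cases hi with
    | drop hi => exact ih hd hi
  | @skip e l' L₁ L₂ b W₁ W₂ h hl ih =>
    intro i K hd hi
    obtain ⟨j, rfl⟩ : ∃ j, i = j + 1 := ⟨i - 1, by omega⟩
    have : j + 1 + l' = (j + l') + 1 := by omega
    rw [this] at hi
    cases hi with
    | drop hi => exact .drop (ih (by omega) hi)

/-- transfer a drop inside the skipped prefix, from the small env to the big one -/
theorem drop_skip_lt {d l : Nat} {L0 L : Env} (h : Drop d l L0 L) :
    ∀ {i K b W}, Drop 0 i L (.pair K b W) → i < d →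
      ∃ K0, Drop 0 i L0 (.pair K0 b (liftT (d-1-i) l W)) ∧ Drop (d-1-i) l K0 K := by
  induction h with
  | atom => intro _ _ _ _ hi _; cases hi
  | pair h ih => intro _ _ _ _ _ hd; omega
  | drop h ih => intro _ _ _ _ _ hd; omega
  | @skip e l' L₁ L₂ b' W₁ W₂ h hl ih =>
    intro i K b W hi hd
    cases hi with
    | pair h0 =>
      cases drop00_eq h0
      refine ⟨L₁, ?_, by simpa using h⟩
      rw [lift_eq hl]
      simpa using Drop.pair (drop00_refl L₁)
    | @drop m _ _ _ _ hi =>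
      obtain ⟨K0, h1, h2⟩ := ih hi (by omega)
      have eq : e - 1 - m = e + 1 - 1 - (m+1) := by omega
      rw [eq] at h1 h2
      exact ⟨K0, .drop h1, h2⟩

/-- transfer a drop inside the skipped prefix, from the big env to the small one -/
theorem drop_skip_lt_inv {d l : Nat} {L0 L : Env} (h : Drop d l L0 L) :
    ∀ {i K0 b W0}, Drop 0 i L0 (.pair K0 b W0) → i < d →
      ∃ K W, Drop 0 i L (.pair K b W) ∧ Drop (d-1-i) l K0 K ∧ W0 = liftT (d-1-i) l W := by
  induction h with
  | atom => intro _ _ _ _ hi _; cases hi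
  | pair h ih => intro _ _ _ _ _ hd; omega
  | drop h ih => intro _ _ _ _ _ hd; omega
  | @skip e l' L₁ L₂ b' W₁ W₂ h hl ih =>
    intro i K0 b W0 hi hd
    cases hi with
    | pair h0 =>
      cases drop00_eq h0
      refine ⟨L₂, W₂, ?_, by simpa using h, by simpa using lift_eq hl⟩
      simpa using Drop.pair (drop00_refl L₂)
    | @drop m _ _ _ _ hi =>
      obtain ⟨K, W, h1, h2, h3⟩ := ih hi (by omega)
      have eq : e - 1 - m = e + 1 - 1 - (m+1) := by omega
      rw [eq] at h2 h3
      exact ⟨K, W, .drop h1, h2, h3⟩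

end SNproof
namespace SNproof
variable {h g : Nat → Nat}

theorem cpx_refl (L : Env) (T : Tm) : Cpx h g L T T := by
  induction T generalizing L with
  | sort k => exact .sort
  | lref i => exact .lref
  | bind b W T ihW ihT => exact .bind (ihW L) (ihT _)
  | flat f V T ihV ihT => exact .flat (ihV L) (ihT L)

theorem cpx_inv_sort {L k X} (hc : Cpx h g L (.sort k) X) :
    X = .sort k ∨ (X = .sort (h k) ∧ ∃ d, g k = d + 1) := by
  cases hc with
  | sort => exact .inl rfl
  | st e => exact .inr ⟨rfl, _, e⟩

theorem cpx_inv_lref {L i X} (hc : Cpx h g L (.lref i) X) :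
    X = .lref i ∨ ∃ K b W₁ W₂, Drop 0 i L (.pair K b W₁) ∧ Cpx h g K W₁ W₂ ∧
      X = liftT 0 (i+1) W₂ := by
  cases hc with
  | lref => exact .inl rfl
  | delta hd hW hl => exact .inr ⟨_, _, _, _, hd, hW, lift_eq hl⟩

theorem cpx_inv_abst {L W T X} (hc : Cpx h g L (.bind .abst W T) X) :
    ∃ W₂ T₂, X = .bind .abst W₂ T₂ ∧ Cpx h g L W W₂ ∧ Cpx h g (.pair L .abst W) T T₂ := by
  cases hc with
  | bind hW hT => exact ⟨_, _, rfl, hW, hT⟩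

theorem cpx_inv_abbr {L V T X} (hc : Cpx h g L (.bind .abbr V T) X) :
    (∃ V₂ T₂, X = .bind .abbr V₂ T₂ ∧ Cpx h g L V V₂ ∧ Cpx h g (.pair L .abbr V) T T₂) ∨
    (∃ U₂, Cpx h g (.pair L .abbr V) T U₂ ∧ U₂ = liftT 0 1 X) := by
  cases hc with
  | bind hW hT => exact .inl ⟨_, _, rfl, hW, hT⟩
  | zeta hT hl => exact .inr ⟨_, hT, lift_eq hl⟩

theorem cpx_inv_appl {L V T X} (hc : Cpx h g L (.flat .appl V T) X) :
    (∃ V₂ T₂, X = .flat .appl V₂ T₂ ∧ Cpx h g L V V₂ ∧ Cpx h g L T T₂) ∨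
    (∃ W S V₂ W₂ S₂, T = .bind .abst W S ∧ Cpx h g L V V₂ ∧ Cpx h g L W W₂ ∧
      Cpx h g (.pair L .abst W) S S₂ ∧ X = .bind .abbr (.flat .cast W₂ V₂) S₂) ∨
    (∃ U S V₂ U₂ S₂, T = .bind .abbr U S ∧ Cpx h g L V V₂ ∧ Cpx h g L U U₂ ∧
      Cpx h g (.pair L .abbr U) S S₂ ∧ X = .bind .abbr U₂ (.flat .appl (liftT 0 1 V₂) S₂)) := by
  cases hc with
  | flat hV hT => exact .inl ⟨_, _, rfl, hV, hT⟩
  | beta hV hW hS => exact .inr (.inl ⟨_, _, _, _, _, rfl, hV, hW, hS, rfl⟩)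
  | theta hV hl hU hS => exact .inr (.inr ⟨_, _, _, _, _, rfl, hV, hU, hS, by rw [← lift_eq hl]⟩)

theorem cpx_inv_cast {L U T X} (hc : Cpx h g L (.flat .cast U T) X) :
    (∃ U₂ T₂, X = .flat .cast U₂ T₂ ∧ Cpx h g L U U₂ ∧ Cpx h g L T T₂) ∨
    Cpx h g L T X ∨ Cpx h g L U X := by
  cases hc with
  | flat hV hT => exact .inl ⟨_, _, rfl, hV, hT⟩
  | eps hT => exact .inr (.inl hT)
  | ee hU => exact .inr (.inr hU)

/-- forward lift of a step -/
theorem cpx_lift {L T₁ T₂} (hc : Cpx h g L T₁ T₂) :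
    ∀ {L0 d l}, Drop d l L0 L → Cpx h g L0 (liftT d l T₁) (liftT d l T₂) := by
  induction hc with
  | sort => intro _ _ _ _; exact .sort
  | lref => intro _ _ _ _; exact .lref
  | st e => intro _ _ _ _; exact .st e
  | bind hW hT ihW ihT =>
    intro L0 d l hd
    exact .bind (ihW hd) (ihT (.skip hd (liftT_lift d l _)))
  | flat hV hT ihV ihT =>
    intro L0 d l hd
    exact .flat (ihV hd) (ihT hd)
  | @delta L K b W₁ W₂ V₂ i hdrop hW hl ih =>
    intro L0 d l hd
    rw [lift_eq hl]
    by_cases hi : i < d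
    · obtain ⟨K0, h1, h2⟩ := drop_skip_lt hd hdrop hi
      have e1 : liftT d l (liftT 0 (i+1) W₂) = liftT 0 (i+1) (liftT (d-1-i) l W₂) := by
        rw [liftT_liftT_swap (Nat.zero_le _) W₂]
        congr 1
        omega
      simp only [liftT, if_pos hi]
      rw [e1]
      exact .delta h1 (ih h2) (liftT_lift _ _ _)
    · have h1 := drop_trans_ge hd hdrop (by omega)
      have e1 : liftT d l (liftT 0 (i+1) W₂) = liftT 0 (i + l + 1) W₂ := by
        rw [liftT_liftT_le (Nat.zero_le _) (by omega)]
        congr 1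
        omega
      simp only [liftT, if_neg hi]
      rw [e1]
      exact .delta h1 hW (liftT_lift _ _ _)
  | beta hV hW hT ihV ihW ihT =>
    intro L0 d l hd
    exact .beta (ihV hd) (ihW hd) (ihT (.skip hd (liftT_lift d l _)))
  | @zeta L V U₁ U₂ T₂ hT hl ih =>
    intro L0 d l hd
    simp only [liftT]
    refine .zeta (ih (.skip hd (liftT_lift d l _))) ?_
    rw [lift_iff, lift_eq hl, ← liftT_liftT_swap (Nat.zero_le d)]
  | eps hT ih =>
    intro L0 d l hd
    exact .eps (ih hd)
  | ee hU ih =>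
    intro L0 d l hd
    exact .ee (ih hd)
  | @theta L V₁ V₂ W₂ U₁ U₂ T₁ T₂ hV hl hU hT ihV ihU ihT =>
    intro L0 d l hd
    simp only [liftT]
    refine .theta (ihV hd) ?_ (ihU hd) (ihT (.skip hd (liftT_lift d l _)))
    rw [lift_iff, lift_eq hl, ← liftT_liftT_swap (Nat.zero_le d)]

/-- inverse lift of a step -/
theorem cpx_inv_lift {L0 U₁ U₂} (hc : Cpx h g L0 U₁ U₂) :
    ∀ {L d l T₁}, Drop d l L0 L → U₁ = liftT d l T₁ →
      ∃ T₂, U₂ = liftT d l T₂ ∧ Cpx h g L T₁ T₂ := by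
  induction hc with
  | @sort _ k =>
    intro L d l T₁ hd e
    cases T₁ <;> simp [liftT] at e
    subst e
    exact ⟨.sort _, by simp [liftT], .sort⟩
  | @lref _ i =>
    intro L d l T₁ hd e
    cases T₁ <;> simp [liftT] at e
    exact ⟨.lref _, by simp [liftT, e], .lref⟩
  | @st _ k d' hk =>
    intro L d l T₁ hd e
    cases T₁ <;> simp [liftT] at e
    subst e
    exact ⟨.sort _, by simp [liftT], .st hk⟩
  | @bind _ b W₁ W₂ S₁ S₂ hW hT ihW ihT =>
    intro L d l T₁ hd e
    cases T₁ <;> simp [liftT] at e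
    obtain ⟨rfl, rfl, rfl⟩ := e
    obtain ⟨W₂', rfl, hW'⟩ := ihW hd rfl
    obtain ⟨T₂', rfl, hT'⟩ := ihT (.skip hd (liftT_lift d l _)) rfl
    exact ⟨.bind b W₂' T₂', rfl, .bind hW' hT'⟩
  | @flat _ f V₁ V₂ S₁ S₂ hV hT ihV ihT =>
    intro L d l T₁ hd e
    cases T₁ <;> simp [liftT] at e
    obtain ⟨rfl, rfl, rfl⟩ := e
    obtain ⟨V₂', rfl, hV'⟩ := ihV hd rfl
    obtain ⟨T₂', rfl, hT'⟩ := ihT hd rfl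
    exact ⟨.flat f V₂' T₂', rfl, .flat hV' hT'⟩
  | @delta _ K b W₁ W₂ V₂ i hdrop hW hl ih =>
    intro L d l T₁ hd e
    cases T₁ with
    | sort k' => simp [liftT] at e
    | bind b' W' T' => simp [liftT] at e
    | flat f' V' T' => simp [liftT] at e
    | lref j =>
    simp [liftT] at e
    rw [lift_eq hl]
    by_cases hj : j < d
    · rw [if_pos hj] at e
      subst e
      obtain ⟨K', W', h1, h2, h3⟩ := drop_skip_lt_inv hd hdrop hj
      obtain ⟨W₂', rfl, hW'⟩ := ih h2 h3
      refine ⟨liftT 0 (i+1) W₂', ?_, .delta h1 hW' (liftT_lift _ _ _)⟩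
      rw [liftT_liftT_swap (Nat.zero_le _) W₂']
      congr 1
      omega
    · rw [if_neg hj] at e
      subst e
      have h1 := drop_trans_ge_inv hd (by omega) hdrop
      refine ⟨liftT 0 (j+1) W₂, ?_, .delta h1 hW (liftT_lift _ _ _)⟩
      rw [liftT_liftT_le (Nat.zero_le _) (by omega)]
      congr 1
      omega
  | @beta _ V₁ V₂ W₁ W₂ S₁ S₂ hV hW hT ihV ihW ihT =>
    intro L d l T₁ hd e
    cases T₁ <;> simp [liftT] at e
    case flat f V' T' =>
    obtain ⟨rfl, rfl, e⟩ := e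
    cases T' <;> simp [liftT] at e
    case bind b' W' S' =>
    obtain ⟨rfl, rfl, rfl⟩ := e
    obtain ⟨V₂', rfl, hV'⟩ := ihV hd rfl
    obtain ⟨W₂', rfl, hW'⟩ := ihW hd rfl
    obtain ⟨S₂', rfl, hS'⟩ := ihT (.skip hd (liftT_lift d l _)) rfl
    exact ⟨.bind .abbr (.flat .cast W₂' V₂') S₂', rfl, .beta hV' hW' hS'⟩
  | @zeta _ V U₁ U₂ T₂ hT hl ih =>
    intro L d l T₁ hd e
    cases T₁ <;> simp [liftT] at e
    case bind b' V' S' =>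
    obtain ⟨rfl, rfl, rfl⟩ := e
    obtain ⟨X, hX, hS'⟩ := ih (.skip hd (liftT_lift d l _)) rfl
    rw [lift_eq hl] at hX
    obtain ⟨T, hT1, hT2⟩ := lift_div (l₁ := 0) (m₁ := 1) (l₂ := d+1) (m₂ := l) (by omega) hX
    refine ⟨T, by simpa using hT1, .zeta hS' ?_⟩
    rw [lift_iff, ← hT2]
  | @eps _ U S₁ S₂ hT ih =>
    intro L d l T₁ hd e
    cases T₁ <;> simp [liftT] at e
    case flat f V' T' =>
    obtain ⟨rfl, rfl, rfl⟩ := e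
    obtain ⟨T₂, rfl, hT'⟩ := ih hd rfl
    exact ⟨T₂, rfl, .eps hT'⟩
  | @ee _ U₁ U₂ S hU ih =>
    intro L d l T₁ hd e
    cases T₁ <;> simp [liftT] at e
    case flat f V' T' =>
    obtain ⟨rfl, rfl, rfl⟩ := e
    obtain ⟨T₂, rfl, hU'⟩ := ih hd rfl
    exact ⟨T₂, rfl, .ee hU'⟩
  | @theta _ V₁ V₂ W₂ U₁ U₂ S₁ S₂ hV hl hU hT ihV ihU ihT =>
    intro L d l T₁ hd e
    cases T₁ <;> simp [liftT] at e
    case flat f V' T' =>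
    obtain ⟨rfl, rfl, e⟩ := e
    cases T' <;> simp [liftT] at e
    case bind b' U' S' =>
    obtain ⟨rfl, rfl, rfl⟩ := e
    obtain ⟨V₂', rfl, hV'⟩ := ihV hd rfl
    obtain ⟨U₂', rfl, hU'⟩ := ihU hd rfl
    obtain ⟨S₂', rfl, hS'⟩ := ihT (.skip hd (liftT_lift d l _)) rfl
    refine ⟨.bind .abbr U₂' (.flat .appl (liftT 0 1 V₂') S₂'), ?_, ?_⟩
    · rw [lift_eq hl]
      simp only [liftT]
      rw [← liftT_liftT_swap (Nat.zero_le d)]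
    · exact .theta hV' (liftT_lift _ _ _) hU' hS'
end SNproof
namespace SNproof
variable {h g : Nat → Nat}

/-- strict step -/
def Red (h g : Nat → Nat) (L : Env) (T₁ T₂ : Tm) : Prop := Cpx h g L T₁ T₂ ∧ T₁ ≠ T₂

/-- chains of strict steps -/
def Rs (h g : Nat → Nat) (L : Env) : Tm → Tm → Prop := Relation.ReflTransGen (Red h g L)

theorem csx_cpx {L T₁ T₂} (hc : Csx h g L T₁) (hs : Cpx h g L T₁ T₂) : Csx h g L T₂ := by
  by_cases e : T₁ = T₂
  · exact e ▸ hc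
  · cases hc with | intro f => exact f T₂ hs e

theorem rs_one {L T₁ T₂} (hs : Cpx h g L T₁ T₂) : Rs h g L T₁ T₂ := by
  by_cases e : T₁ = T₂
  · exact e ▸ Relation.ReflTransGen.refl
  · exact Relation.ReflTransGen.single ⟨hs, e⟩

theorem csx_rs {L T₁ T₂} (hc : Csx h g L T₁) (hs : Rs h g L T₁ T₂) : Csx h g L T₂ := by
  induction hs with
  | refl => exact hc
  | tail _ hstep ih => exact csx_cpx ih hstep.1

theorem csx_acc {L T} : Csx h g L T ↔ Acc (fun T₂ T₁ => Red h g L T₁ T₂) T := by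
  constructor
  · intro hc
    induction hc with
    | intro f ih => exact Acc.intro _ fun T₂ hr => ih T₂ hr.1 hr.2
  · intro hc
    induction hc with
    | intro T f ih => exact Csx.intro fun T₂ hs hne => ih T₂ ⟨hs, hne⟩

theorem acc_transGen {α : Type _} {r : α → α → Prop} {a : α} (h : Acc r a) :
    Acc (Relation.TransGen r) a := by
  induction h with
  | intro x _ ih =>
    refine Acc.intro x fun y hy => ?_
    cases hy with
    | single hs => exact ih _ hs
    | tail hy hs => exact (ih _ hs).inv hy

theorem tg_of_rs_ne {L T₁ T₂} (hs : Rs h g L T₁ T₂) (hne : T₁ ≠ T₂) :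
    Relation.TransGen (Red h g L) T₁ T₂ := by
  rcases (Relation.reflTransGen_iff_eq_or_transGen.mp hs) with e | htg
  · exact absurd e.symm hne
  · exact htg

/-- star congruences -/
theorem rs_flat_dx {L f V T₁ T₂} (hs : Rs h g L T₁ T₂) :
    Rs h g L (.flat f V T₁) (.flat f V T₂) := by
  refine Relation.ReflTransGen.lift _ (fun a b r => ?_) _ _ hs
  exact ⟨.flat (cpx_refl L V) r.1, by simpa using r.2⟩

theorem rs_flat_sn {L f V₁ V₂ T} (hs : Rs h g L V₁ V₂) :
    Rs h g L (.flat f V₁ T) (.flat f V₂ T) := by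
  refine Relation.ReflTransGen.lift (fun X => Tm.flat f X T) (fun a b r => ?_) _ _ hs
  exact ⟨.flat r.1 (cpx_refl L T), by simpa using r.2⟩

theorem rs_bind_dx {L b W T₁ T₂} (hs : Rs h g (.pair L b W) T₁ T₂) :
    Rs h g L (.bind b W T₁) (.bind b W T₂) := by
  refine Relation.ReflTransGen.lift _ (fun a b r => ?_) _ _ hs
  exact ⟨.bind (cpx_refl L W) r.1, by simpa using r.2⟩

theorem rs_bind_sn {L b W₁ W₂ T} (hs : Rs h g L W₁ W₂) :
    Rs h g L (.bind b W₁ T) (.bind b W₂ T) := by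
  refine Relation.ReflTransGen.lift (fun X => Tm.bind b X T) (fun a b r => ?_) _ _ hs
  exact ⟨.bind r.1 (cpx_refl _ T), by simpa using r.2⟩

theorem rs_lift {L T₁ T₂} (hs : Rs h g L T₁ T₂) {L0 d l} (hd : Drop d l L0 L) :
    Rs h g L0 (liftT d l T₁) (liftT d l T₂) := by
  refine Relation.ReflTransGen.lift _ (fun a b r => ?_) _ _ hs
  exact ⟨cpx_lift r.1 hd, fun e => r.2 (liftT_inj e)⟩

theorem csx_lift {L T} (hc : Csx h g L T) : ∀ {L0 d l}, Drop d l L0 L →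
    Csx h g L0 (liftT d l T) := by
  induction hc with
  | @intro T f ih =>
    intro L0 d l hd
    refine Csx.intro fun U₂ hs hne => ?_
    obtain ⟨T₂, rfl, hT₂⟩ := cpx_inv_lift hs hd rfl
    exact ih T₂ hT₂ (fun e => hne (e ▸ rfl)) hd

theorem csx_inv_lift {L0 U} (hc : Csx h g L0 U) :
    ∀ {L d l T}, Drop d l L0 L → U = liftT d l T → Csx h g L T := by
  induction hc with
  | @intro U f ih =>
    intro L d l T hd e
    subst e
    refine Csx.intro fun T₂ hs hne => ?_
    exact ih _ (cpx_lift hs hd) (fun e => hne (liftT_inj e)) hd rfl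

/-- environment refinement for beta -/
inductive Lsubr : Env → Env → Prop
| atom : Lsubr .null .null
| pair {L₁ L₂ b W} : Lsubr L₁ L₂ → Lsubr (.pair L₁ b W) (.pair L₂ b W)
| beta {L₁ L₂ W V} : Lsubr L₁ L₂ →
    Lsubr (.pair L₁ .abbr (.flat .cast W V)) (.pair L₂ .abst W)

theorem lsubr_refl (L : Env) : Lsubr L L := by
  induction L with
  | null => exact .atom
  | pair L b W ih => exact .pair ih

theorem lsubr_drop {L₁ L₂ : Env} (hs : Lsubr L₁ L₂) :
    ∀ {i K₂ b W}, Drop 0 i L₂ (.pair K₂ b W) →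
    (∃ K₁, Drop 0 i L₁ (.pair K₁ b W) ∧ Lsubr K₁ K₂) ∨
    (b = .abst ∧ ∃ K₁ V, Drop 0 i L₁ (.pair K₁ .abbr (.flat .cast W V)) ∧ Lsubr K₁ K₂) := by
  induction hs with
  | atom => intro _ _ _ _ hd; cases hd
  | @pair L₁ L₂ b' W' hsub ih =>
    intro i K₂ b W hd
    cases hd with
    | pair h0 =>
      cases drop00_eq h0
      exact .inl ⟨L₁, .pair (drop00_refl L₁), hsub⟩
    | drop hd =>
      rcases ih hd with ⟨K₁, h1, h2⟩ | ⟨rfl, K₁, V, h1, h2⟩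
      · exact .inl ⟨K₁, .drop h1, h2⟩
      · exact .inr ⟨rfl, K₁, V, .drop h1, h2⟩
  | @beta L₁ L₂ W' V' hsub ih =>
    intro i K₂ b W hd
    cases hd with
    | pair h0 =>
      cases drop00_eq h0
      exact .inr ⟨rfl, L₁, V', .pair (drop00_refl L₁), hsub⟩
    | drop hd =>
      rcases ih hd with ⟨K₁, h1, h2⟩ | ⟨rfl, K₁, V, h1, h2⟩
      · exact .inl ⟨K₁, .drop h1, h2⟩
      · exact .inr ⟨rfl, K₁, V, .drop h1, h2⟩

theorem lsubr_cpx {L₂ T₁ T₂} (hc : Cpx h g L₂ T₁ T₂) :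
    ∀ {L₁}, Lsubr L₁ L₂ → Cpx h g L₁ T₁ T₂ := by
  induction hc with
  | sort => intro _ _; exact .sort
  | lref => intro _ _; exact .lref
  | st e => intro _ _; exact .st e
  | bind _ _ ihW ihT => intro L₁ hs; exact .bind (ihW hs) (ihT (.pair hs))
  | flat _ _ ihV ihT => intro L₁ hs; exact .flat (ihV hs) (ihT hs)
  | delta hd hW hl ih =>
    intro L₁ hs
    rcases lsubr_drop hs hd with ⟨K₁, h1, h2⟩ | ⟨rfl, K₁, V, h1, h2⟩
    · exact .delta h1 (ih h2) hl
    · exact .delta h1 (.ee (ih h2)) hl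
  | beta _ _ _ ihV ihW ihT => intro L₁ hs; exact .beta (ihV hs) (ihW hs) (ihT (.pair hs))
  | zeta _ hl ihU => intro L₁ hs; exact .zeta (ihU (.pair hs)) hl
  | eps _ ih => intro L₁ hs; exact .eps (ih hs)
  | ee _ ih => intro L₁ hs; exact .ee (ih hs)
  | theta _ hl _ _ ihV ihU ihT =>
    intro L₁ hs
    exact .theta (ihV hs) hl (ihU hs) (ihT (.pair hs))

theorem rs_lsubr {L₁ L₂ a b} (hs : Lsubr L₁ L₂) (hr : Rs h g L₂ a b) : Rs h g L₁ a b :=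
  Relation.ReflTransGen.mono (fun _ _ r => ⟨lsubr_cpx r.1 hs, r.2⟩) _ _ hr

theorem lpx_refl (L : Env) : Lpx h g L L := by
  induction L with
  | null => exact .atom
  | pair L b W ih => exact .pair ih (cpx_refl L W)

theorem lpx_drop {L₁ L₂ : Env} (hl : Lpx h g L₁ L₂) :
    ∀ {i K₂ b W₂}, Drop 0 i L₂ (.pair K₂ b W₂) →
      ∃ K₁ W₁, Drop 0 i L₁ (.pair K₁ b W₁) ∧ Lpx h g K₁ K₂ ∧ Cpx h g K₁ W₁ W₂ := by
  induction hl with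
  | atom => intro _ _ _ _ hd; cases hd
  | @pair L₁ L₂ b' W₁' W₂' hlpx hcpx ih =>
    intro i K₂ b W₂ hd
    cases hd with
    | pair h0 =>
      cases drop00_eq h0
      exact ⟨L₁, W₁', .pair (drop00_refl L₁), hlpx, hcpx⟩
    | drop hd =>
      obtain ⟨K₁, W₁, h1, h2, h3⟩ := ih hd
      exact ⟨K₁, W₁, .drop h1, h2, h3⟩

theorem lpx_cpx_trans {L₂ T₁ T₂} (hc : Cpx h g L₂ T₁ T₂) :
    ∀ {L₁}, Lpx h g L₁ L₂ → Rs h g L₁ T₁ T₂ := by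
  induction hc with
  | sort => intro _ _; exact .refl
  | lref => intro _ _; exact .refl
  | st e => intro _ _; exact rs_one (.st e)
  | @bind _ b W₁ W₂ S₁ S₂ _ _ ihW ihT =>
    intro L₁ hl
    exact (rs_bind_dx (ihT (.pair hl (cpx_refl _ _)))).trans (rs_bind_sn (ihW hl))
  | flat _ _ ihV ihT =>
    intro L₁ hl
    exact (rs_flat_dx (ihT hl)).trans (rs_flat_sn (ihV hl))
  | @delta _ K₂ b W₁ W₂ V₂ i hd hW hlift ih =>
    intro L₁ hl
    obtain ⟨K₁, W₀, h1, h2, h3⟩ := lpx_drop hl hd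
    rw [lift_eq hlift]
    refine (rs_one (.delta h1 h3 (liftT_lift 0 (i+1) W₁))).trans ?_
    exact rs_lift (ih h2) (drop0_succ h1)
  | @beta _ V₁ V₂ W₁ W₂ S₁ S₂ _ _ _ ihV ihW ihT =>
    intro L₁ hl
    refine (rs_one (.beta (cpx_refl L₁ V₁) (cpx_refl L₁ W₁) (cpx_refl _ S₁))).trans ?_
    refine (rs_bind_dx (rs_lsubr (.beta (lsubr_refl L₁)) (ihT (.pair hl (cpx_refl _ _))))).trans ?_
    exact rs_bind_sn ((rs_flat_sn (ihW hl)).trans (rs_flat_dx (ihV hl)))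
  | @zeta _ V U₁ U₂ S₂ _ hlift ihU =>
    intro L₁ hl
    refine (rs_bind_dx (ihU (.pair hl (cpx_refl _ _)))).trans ?_
    exact rs_one (.zeta (cpx_refl _ U₂) hlift)
  | eps _ ih =>
    intro L₁ hl
    exact (rs_one (.eps (cpx_refl _ _))).trans (ih hl)
  | ee _ ih =>
    intro L₁ hl
    exact (rs_one (.ee (cpx_refl _ _))).trans (ih hl)
  | @theta _ V₁ V₂ W₂ U₁ U₂ S₁ S₂ _ hlift _ _ ihV ihU ihT =>
    intro L₁ hl
    refine (rs_one (.theta (cpx_refl L₁ V₁) (liftT_lift 0 1 V₁) (cpx_refl L₁ U₁)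
      (cpx_refl _ S₁))).trans ?_
    rw [lift_eq hlift]
    refine (rs_bind_dx ((rs_flat_dx (ihT (.pair hl (cpx_refl _ _)))).trans
      (rs_flat_sn (rs_lift (ihV hl) (.drop (drop00_refl L₁)))))).trans ?_
    exact rs_bind_sn (ihU hl)

theorem csx_lpx_conf {L₁ T} (hc : Csx h g L₁ T) {L₂} (hl : Lpx h g L₁ L₂) :
    Csx h g L₂ T := by
  have acc := acc_transGen (csx_acc.mp hc)
  clear hc
  induction acc with
  | intro T _ ih =>
    refine Csx.intro fun T₂ hs hne => ?_
    exact ih T₂ ((Relation.transGen_swap).mp (tg_of_rs_ne (lpx_cpx_trans hs hl) hne))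
end SNproof
namespace SNproof
variable {h g : Nat → Nat}

def apps : List Tm → Tm → Tm
| [], T => T
| V :: Vs, T => .flat .appl V (apps Vs T)

theorem apps_append (Vs : List Tm) (V T : Tm) :
    apps (Vs ++ [V]) T = apps Vs (.flat .appl V T) := by
  induction Vs with
  | nil => rfl
  | cons W Ws ih => simp [apps, ih]

theorem liftT_apps (d l : Nat) (Vs : List Tm) (T : Tm) :
    liftT d l (apps Vs T) = apps (Vs.map (liftT d l)) (liftT d l T) := by
  induction Vs with
  | nil => rfl
  | cons W Ws ih => simp [apps, liftT, ih]

theorem apps_inj {Vs Vs₂ : List Tm} {S S₂ : Tm} (hlen : Vs.length = Vs₂.length)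
    (e : apps Vs S = apps Vs₂ S₂) : Vs = Vs₂ ∧ S = S₂ := by
  induction Vs generalizing Vs₂ with
  | nil => cases Vs₂ with
    | nil => exact ⟨rfl, e⟩
    | cons _ _ => simp at hlen
  | cons V Vs ih =>
    cases Vs₂ with
    | nil => simp at hlen
    | cons V₂ Vs₂ =>
      simp only [apps, Tm.flat.injEq] at e
      obtain ⟨_, rfl, e2⟩ := e
      obtain ⟨rfl, rfl⟩ := ih (by simpa using hlen) e2
      exact ⟨rfl, rfl⟩

theorem cpx_apps {L : Env} {Vs Vs₂ : List Tm} {S S₂ : Tm}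
    (hf : List.Forall₂ (Cpx h g L) Vs Vs₂) (hS : Cpx h g L S S₂) :
    Cpx h g L (apps Vs S) (apps Vs₂ S₂) := by
  induction hf with
  | nil => exact hS
  | cons hV _ ih => exact .flat hV ih

def Simple : Tm → Prop
| .bind _ _ _ => False
| _ => True

theorem cpx_inv_apps_simple {L Vs S X} (hS : Simple S) (hc : Cpx h g L (apps Vs S) X) :
    ∃ Vs₂ S₂, X = apps Vs₂ S₂ ∧ List.Forall₂ (Cpx h g L) Vs Vs₂ ∧ Cpx h g L S S₂ := by
  induction Vs generalizing X with
  | nil => exact ⟨[], X, rfl, .nil, hc⟩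
  | cons V Vs ih =>
    rcases cpx_inv_appl hc with ⟨V₂, T₂, rfl, hV, hT⟩ |
      ⟨W, S', V₂, W₂, S₂, e, _⟩ | ⟨U, S', V₂, U₂, S₂, e, _⟩
    · obtain ⟨Vs₂, S₂, rfl, hf, hS₂⟩ := ih hT
      exact ⟨V₂ :: Vs₂, S₂, rfl, .cons hV hf, hS₂⟩
    · exfalso; cases Vs with
      | nil => rw [show apps [] S = S from rfl] at e; subst e; exact hS
      | cons _ _ => simp [apps] at e
    · exfalso; cases Vs with
      | nil => rw [show apps [] S = S from rfl] at e; subst e; exact hS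
      | cons _ _ => simp [apps] at e

theorem cpx_inv_apps_abbr {L Vs V T X} (hc : Cpx h g L (apps Vs (.bind .abbr V T)) X) :
    (∃ Vs₂ V₂ T₂, List.Forall₂ (Cpx h g L) Vs Vs₂ ∧ Cpx h g L V V₂ ∧
      Cpx h g (.pair L .abbr V) T T₂ ∧ X = apps Vs₂ (.bind .abbr V₂ T₂)) ∨
    (∃ Vs₂ X', List.Forall₂ (Cpx h g L) Vs Vs₂ ∧ Cpx h g (.pair L .abbr V) T (liftT 0 1 X') ∧
      X = apps Vs₂ X') ∨
    (∃ Vs₁ Vn Vs₂₁ Vn₂ V₂ T₂, Vs = Vs₁ ++ [Vn] ∧ List.Forall₂ (Cpx h g L) Vs₁ Vs₂₁ ∧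
      Cpx h g L Vn Vn₂ ∧ Cpx h g L V V₂ ∧ Cpx h g (.pair L .abbr V) T T₂ ∧
      X = apps Vs₂₁ (.bind .abbr V₂ (.flat .appl (liftT 0 1 Vn₂) T₂))) := by
  induction Vs generalizing X with
  | nil =>
    rcases cpx_inv_abbr hc with ⟨V₂, T₂, rfl, hV, hT⟩ | ⟨U₂, hT, e⟩
    · exact .inl ⟨[], V₂, T₂, .nil, hV, hT, rfl⟩
    · exact .inr (.inl ⟨[], X, .nil, e ▸ hT, rfl⟩)
  | cons V₀ Vs ih =>
    cases Vs with
    | nil =>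
      rcases cpx_inv_appl hc with ⟨V₂, T₂, rfl, hV, hT⟩ |
        ⟨W, S', V₂, W₂, S₂, e, _⟩ | ⟨U, S', V₂, U₂, S₂, e, hV, hU, hS, rfl⟩
      · rcases cpx_inv_abbr hT with ⟨V₂', T₂', rfl, hV', hT'⟩ | ⟨U₂, hT', e⟩
        · exact .inl ⟨[V₂], V₂', T₂', .cons hV .nil, hV', hT', rfl⟩
        · exact .inr (.inl ⟨[V₂], T₂, .cons hV .nil, e ▸ hT', rfl⟩)
      · simp [apps] at e
      · simp only [apps] at e
        cases e
        exact .inr (.inr ⟨[], V₀, [], V₂, U₂, S₂, rfl, .nil, hV, hU, hS, rfl⟩)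
    | cons V₁ Vs' =>
      rcases cpx_inv_appl hc with ⟨V₂, T₂, rfl, hV, hT⟩ |
        ⟨W, S', V₂, W₂, S₂, e, _⟩ | ⟨U, S', V₂, U₂, S₂, e, _⟩
      · rcases ih hT with ⟨Vs₂, V₂', T₂', hf, hV', hT', rfl⟩ |
          ⟨Vs₂, X', hf, hT', rfl⟩ |
          ⟨Vs₁, Vn, Vs₂₁, Vn₂, V₂', T₂', e, hf, hVn, hV', hT', rfl⟩
        · exact .inl ⟨V₂ :: Vs₂, V₂', T₂', .cons hV hf, hV', hT', rfl⟩
        · exact .inr (.inl ⟨V₂ :: Vs₂, X', .cons hV hf, hT', rfl⟩)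
        · exact .inr (.inr ⟨V₀ :: Vs₁, Vn, V₂ :: Vs₂₁, Vn₂, V₂', T₂',
            by rw [e]; simp, .cons hV hf, hVn, hV', hT', rfl⟩)
      · simp [apps] at e
      · simp [apps] at e

end SNproof
namespace SNproof
variable {h g : Nat → Nat}

theorem csx_sort (hg : ∀ k d, g k = d + 1 → g (h k) = d) (L : Env) (k : Nat) :
    Csx h g L (.sort k) := by
  generalize e : g k = n
  induction n using Nat.strong_induction_on generalizing k with
  | _ n ih =>
    refine Csx.intro fun T₂ hs hne => ?_
    rcases cpx_inv_sort hs with rfl | ⟨rfl, d, hd⟩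
    · exact absurd rfl hne
    · exact ih d (by omega) (h k) (hg k d hd)

theorem csx_fwd_flat_dx {L f V T} (hc : Csx h g L (.flat f V T)) : Csx h g L T := by
  generalize e : Tm.flat f V T = X at hc
  induction hc generalizing V T with
  | @intro X fX ih =>
    subst e
    refine Csx.intro fun T₂ hs hne => ?_
    exact ih _ (.flat (cpx_refl L V) hs) (by simp [hne]) rfl

theorem csx_fwd_bind_sn {L b W T} (hc : Csx h g L (.bind b W T)) : Csx h g L W := by
  generalize e : Tm.bind b W T = X at hc
  induction hc generalizing W T with
  | @intro X fX ih =>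
    subst e
    refine Csx.intro fun W₂ hs hne => ?_
    exact ih _ (.bind hs (cpx_refl _ T)) (by simp [hne]) rfl

theorem csx_fwd_apps {L Vs T} (hc : Csx h g L (apps Vs T)) : Csx h g L T := by
  induction Vs with
  | nil => exact hc
  | cons V Vs ih => exact ih (csx_fwd_flat_dx hc)

/-- product of accessibilities for simultaneous reflexive steps -/
theorem acc_prod {α β : Type _} {ca : α → α → Prop} {cb : β → β → Prop} {a : α} {b : β}
    (ha : Acc (fun y x => ca x y ∧ x ≠ y) a) (hb : Acc (fun y x => cb x y ∧ x ≠ y) b) :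
    Acc (fun (q p : α × β) => ca p.1 q.1 ∧ cb p.2 q.2 ∧ p ≠ q) (a, b) := by
  induction ha generalizing b with
  | @intro a ha iha =>
    induction hb with
    | @intro b hb ihb =>
      refine Acc.intro _ fun q hq => ?_
      obtain ⟨h1, h2, hne⟩ := hq
      by_cases e1 : a = q.1
      · have e2 : b ≠ q.2 := fun e2 => hne (by cases q; simp_all)
        have := ihb q.2 ⟨h2, e2⟩
        cases q
        simp_all
      · have hacc : Acc (fun y x => cb x y ∧ x ≠ y) q.2 := by
          by_cases e2 : b = q.2
          · exact e2 ▸ Acc.intro b hb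
          · exact hb q.2 ⟨h2, e2⟩
        have := iha q.1 ⟨h1, e1⟩ hacc
        cases q
        simp_all
end SNproof
namespace SNproof
variable {h g : Nat → Nat}

theorem forall₂_map {R R' : Tm → Tm → Prop} {Vs Ws : List Tm} (f : Tm → Tm)
    (hf : List.Forall₂ R Vs Ws) (him : ∀ a b, R a b → R' (f a) (f b)) :
    List.Forall₂ R' (Vs.map f) (Ws.map f) := by
  induction hf with
  | nil => simp
  | cons hr _ ih => simpa using List.Forall₂.cons (him _ _ hr) ih

theorem acc_list {L : Env} {Ts : List Tm} (hc : ∀ T ∈ Ts, Csx h g L T) :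
    Acc (fun Ts₂ Ts₁ => List.Forall₂ (Cpx h g L) Ts₁ Ts₂ ∧ Ts₁ ≠ Ts₂) Ts := by
  induction Ts with
  | nil =>
    refine Acc.intro _ fun q hq => ?_
    cases hq.1
    exact absurd rfl hq.2
  | cons T Ts ih =>
    have hT : Acc (fun y x => Cpx h g L x y ∧ x ≠ y) T :=
      csx_acc.mp (hc T (by simp))
    have hTs := ih (fun T hT' => hc T (by simp [hT']))
    have hprod := acc_prod (ca := Cpx h g L)
      (cb := fun a b => List.Forall₂ (Cpx h g L) a b) hT hTs
    clear hT hTs hc ih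
    generalize ep : (T, Ts) = p at hprod
    have : T :: Ts = p.1 :: p.2 := by rw [← ep]
    rw [this]; clear this ep
    induction hprod with
    | @intro p hp ihp =>
      refine Acc.intro _ fun q hq => ?_
      obtain ⟨hf, hne⟩ := hq
      cases q with
      | nil => cases hf
      | cons y ys =>
        cases hf with
        | cons hy hys =>
          exact ihp (y, ys) ⟨hy, hys, fun e => hne (by rw [e])⟩

theorem S_sort {L : Env} {Vs : List Tm} {k : Nat}
    (hg : ∀ k d, g k = d + 1 → g (h k) = d)
    (hVs : ∀ V ∈ Vs, Csx h g L V) : Csx h g L (apps Vs (.sort k)) := by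
  have hacc := acc_list (Ts := Tm.sort k :: Vs)
    (fun T hT => by
      rcases List.mem_cons.mp hT with rfl | hT
      exacts [csx_sort hg L k, hVs T hT])
  clear hVs
  generalize ep : (Tm.sort k :: Vs : List Tm) = P at hacc
  induction hacc generalizing k Vs with
  | @intro P hP ihP =>
    subst ep
    refine Csx.intro fun Z hs hne => ?_
    obtain ⟨Vs₂, S₂, rfl, hf, hS₂⟩ := cpx_inv_apps_simple (by constructor) hs
    have hk : ∃ k₂, S₂ = Tm.sort k₂ := by
      rcases cpx_inv_sort hS₂ with rfl | ⟨rfl, _⟩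
      exacts [⟨k, rfl⟩, ⟨h k, rfl⟩]
    obtain ⟨k₂, rfl⟩ := hk
    refine ihP (Tm.sort k₂ :: Vs₂) ⟨.cons hS₂ hf, ?_⟩ rfl
    intro e
    obtain ⟨e1, e2⟩ := List.cons.injEq .. ▸ e
    exact hne (by rw [← e2, show Tm.sort k = Tm.sort k₂ from e1.symm ▸ rfl])

theorem S_delta {L K : Env} {b W i} (hd : Drop 0 i L (.pair K b W)) :
    ∀ {X}, Csx h g L X → ∀ {Vs}, X = apps Vs (liftT 0 (i+1) W) →
    Csx h g L (apps Vs (.lref i)) := by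
  intro X hX
  induction hX with
  | @intro X fX ihX =>
    intro Vs e
    refine Csx.intro fun Z hs hne => ?_
    obtain ⟨Vs₂, S₂, rfl, hf, hS₂⟩ := cpx_inv_apps_simple (by constructor) hs
    rcases cpx_inv_lref hS₂ with rfl | ⟨K', b', W₁', W₂, hd', hW, rfl⟩
    · -- head unchanged, spine moved
      have hx : Cpx h g L X (apps Vs₂ (liftT 0 (i+1) W)) :=
        e ▸ cpx_apps hf (cpx_refl _ _)
      refine ihX _ hx ?_ rfl
      intro e2
      rw [e] at e2
      obtain ⟨rfl, -⟩ := apps_inj hf.length_eq e2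
      exact hne rfl
    · -- delta fired: the result is a reduct of the hypothesis term
      cases drop0_mono hd hd'
      have hx : Cpx h g L X (apps Vs₂ (liftT 0 (i+1) W₂)) :=
        e ▸ cpx_apps hf (cpx_lift hW (drop0_succ hd))
      exact csx_cpx (Csx.intro fX) hx

theorem S_cast {L : Env} : ∀ {X}, Csx h g L X → ∀ {Y}, Csx h g L Y →
    ∀ {Vs U T}, X = apps Vs U → Y = apps Vs T →
    Csx h g L (apps Vs (.flat .cast U T)) := by
  intro X hX
  induction hX with
  | @intro X fX ihX =>
    intro Y hY
    induction hY with
    | @intro Y fY ihY =>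
      intro Vs U T eX eY
      refine Csx.intro fun Z hs hne => ?_
      obtain ⟨Vs₂, S₂, rfl, hf, hS₂⟩ := cpx_inv_apps_simple (by constructor) hs
      rcases cpx_inv_cast hS₂ with ⟨U₂, T₂, rfl, hU₂, hT₂⟩ | hT₂ | hU₂
      · by_cases ex : X = apps Vs₂ U₂
        · -- left side unchanged
          obtain ⟨rfl, rfl⟩ := apps_inj hf.length_eq (eX.symm.trans ex)
          refine ihY (apps Vs T₂) (eY ▸ cpx_apps hf hT₂) ?_ eX rfl
          intro e2
          rw [eY] at e2
          obtain ⟨-, rfl⟩ := apps_inj hf.length_eq e2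
          exact hne rfl
        · have hx : Cpx h g L X (apps Vs₂ U₂) := eX ▸ cpx_apps hf hU₂
          have hy : Csx h g L (apps Vs₂ T₂) :=
            csx_cpx (Csx.intro fY) (eY ▸ cpx_apps hf hT₂)
          exact ihX _ hx ex hy rfl rfl
      · exact csx_cpx (Csx.intro fY) (eY ▸ cpx_apps hf hT₂)
      · exact csx_cpx (Csx.intro fX) (eX ▸ cpx_apps hf hU₂)

end SNproof
namespace SNproof
variable {h g : Nat → Nat}

theorem drop01 (L : Env) (b : Bk) (W : Tm) : Drop 0 1 (.pair L b W) L :=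
  .drop (drop00_refl L)

theorem S_beta {L : Env} : ∀ {X}, Csx h g L X → ∀ {Vs V W T},
    X = apps Vs (.bind .abbr (.flat .cast W V) T) →
    Csx h g L (apps Vs (.flat .appl V (.bind .abst W T))) := by
  intro X hX
  induction hX with
  | @intro X fX ihX =>
    intro Vs V W T e
    refine Csx.intro fun Z hs hne => ?_
    obtain ⟨Vs₂, S₂, rfl, hf, hS₂⟩ := cpx_inv_apps_simple (by constructor) hs
    rcases cpx_inv_appl hS₂ with ⟨V₂, X', rfl, hV₂, hX'⟩ |
      ⟨W', S', V₂, W₂, S₂', eT, hV₂, hW₂, hS₂', rfl⟩ | ⟨U, S', _, _, _, eT, _⟩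
    · obtain ⟨W₂, T₂, rfl, hW₂, hT₂⟩ := cpx_inv_abst hX'
      have hstep : Cpx h g L X (apps Vs₂ (.bind .abbr (.flat .cast W₂ V₂) T₂)) :=
        e ▸ cpx_apps hf (.bind (.flat hW₂ hV₂) (lsubr_cpx hT₂ (.beta (lsubr_refl L))))
      refine ihX _ hstep ?_ rfl
      intro e2
      rw [e] at e2
      obtain ⟨rfl, e3⟩ := apps_inj hf.length_eq e2
      injection e3 with _ e4 e5
      injection e4 with _ e6 e7
      subst e5; subst e6; subst e7
      exact hne rfl
    · injection eT with _ eW eS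
      subst eW; subst eS
      exact csx_cpx (Csx.intro fX)
        (e ▸ cpx_apps hf (.bind (.flat hW₂ hV₂) (lsubr_cpx hS₂' (.beta (lsubr_refl L)))))
    · exact absurd eT (by simp)

theorem S_abbr {L : Env} : ∀ {V}, Csx h g L V → ∀ {X}, Csx h g (.pair L .abbr V) X →
    ∀ n {Vs T}, Vs.length ≤ n → X = apps (Vs.map (liftT 0 1)) T →
    Csx h g L (apps Vs (.bind .abbr V T)) := by
  intro V hV
  induction hV with
  | @intro V fV ihV =>
    intro X hX
    induction hX with
    | @intro X fX ihX =>
      intro n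
      induction n using Nat.strong_induction_on with
      | _ n ihn =>
        intro Vs T hlen e
        refine Csx.intro fun Z hs hne => ?_
        rcases cpx_inv_apps_abbr hs with
          ⟨Vs₂, V₂, T₂, hf, hV₂, hT₂, rfl⟩ |
          ⟨Vs₂, X', hf, hT', rfl⟩ |
          ⟨Vs₁, Vn, Vs₂₁, Vn₂, V₂, T₂, eVs, hf, hVn, hV₂, hT₂, rfl⟩
        · -- congruence on binder and spine
          have hlf := forall₂_map (liftT 0 1) hf
            (fun a b r => cpx_lift r (drop01 L .abbr V))
          have hstep : Cpx h g (L.pair .abbr V) X (apps (Vs₂.map (liftT 0 1)) T₂) :=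
            e ▸ cpx_apps hlf hT₂
          by_cases hv : V = V₂
          · subst hv
            by_cases hx : X = apps (Vs₂.map (liftT 0 1)) T₂
            · rw [e] at hx
              obtain ⟨em, rfl⟩ := apps_inj (by simpa using hf.length_eq) hx
              obtain rfl : Vs = Vs₂ :=
                List.map_injective_iff.mpr (fun a b eab => liftT_inj eab) em
              exact absurd rfl hne
            · exact ihX _ hstep hx n (by rw [← hf.length_eq]; exact hlen) rfl
          · have hX₂ : Csx h g (L.pair .abbr V₂) (apps (Vs₂.map (liftT 0 1)) T₂) :=
              csx_lpx_conf (csx_cpx (Csx.intro fX) hstep) (.pair (lpx_refl L) hV₂)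
            exact ihV V₂ hV₂ hv hX₂ n (by rw [← hf.length_eq]; exact hlen) rfl
        · -- zeta
          have hstep : Cpx h g (L.pair .abbr V) X (liftT 0 1 (apps Vs₂ X')) := by
            rw [liftT_apps]
            exact e ▸ cpx_apps (forall₂_map (liftT 0 1) hf
              (fun a b r => cpx_lift r (drop01 L .abbr V))) hT'
          exact csx_inv_lift (csx_cpx (Csx.intro fX) hstep) (drop01 L .abbr V) rfl
        · -- theta
          subst eVs
          have e2 : X = apps (Vs₁.map (liftT 0 1)) (.flat .appl (liftT 0 1 Vn) T) := by
            rw [e]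
            simp only [List.map_append, List.map_cons, List.map_nil, apps_append]
          have hlf := forall₂_map (liftT 0 1) hf
            (fun a b r => cpx_lift r (drop01 L .abbr V))
          have hstep : Cpx h g (L.pair .abbr V) X
              (apps (Vs₂₁.map (liftT 0 1)) (.flat .appl (liftT 0 1 Vn₂) T₂)) := by
            rw [e2]
            exact cpx_apps hlf (.flat (cpx_lift hVn (drop01 L .abbr V)) hT₂)
          by_cases hv : V = V₂
          · subst hv
            by_cases hx : X = apps (Vs₂₁.map (liftT 0 1)) (.flat .appl (liftT 0 1 Vn₂) T₂)
            · rw [e2] at hx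
              obtain ⟨em, ef⟩ := apps_inj (by simpa using hf.length_eq) hx
              obtain rfl : Vs₁ = Vs₂₁ :=
                List.map_injective_iff.mpr (fun a b eab => liftT_inj eab) em
              injection ef with _ e6 e7
              obtain rfl : Vn = Vn₂ := liftT_inj e6
              subst e7
              refine ihn Vs₁.length ?_ le_rfl e2
              simp only [List.length_append, List.length_cons, List.length_nil] at hlen
              omega
            · exact ihX _ hstep hx Vs₂₁.length le_rfl rfl
          · have hX₂ : Csx h g (L.pair .abbr V₂)
                (apps (Vs₂₁.map (liftT 0 1)) (.flat .appl (liftT 0 1 Vn₂) T₂)) :=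
              csx_lpx_conf (csx_cpx (Csx.intro fX) hstep) (.pair (lpx_refl L) hV₂)
            exact ihV V₂ hV₂ hv hX₂ Vs₂₁.length le_rfl rfl

end SNproof
namespace SNproof
variable {h g : Nat → Nat}

/-- one lift/extension step on closures -/
def ExtStep (p q : Env × Tm) : Prop :=
  ∃ d l, Drop d l q.1 p.1 ∧ q.2 = liftT d l p.2

/-- chains of extension steps -/
def Exts : Env × Tm → Env × Tm → Prop := Relation.ReflTransGen ExtStep

theorem csx_exts {L T} (hc : Csx h g L T) {q : Env × Tm} (hch : Exts (L, T) q) :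
    Csx h g q.1 q.2 := by
  induction hch with
  | refl => exact hc
  | tail _ hstep ih =>
    obtain ⟨d, l, hd, e⟩ := hstep
    exact e ▸ csx_lift ih hd

theorem exts_trans {p q r : Env × Tm} (h1 : Exts p q) (h2 : Exts q r) : Exts p r :=
  Relation.ReflTransGen.trans h1 h2

theorem forall₂_map_right {α : Type _} {R R' : α → α → Prop} {Vs Ws : List α} (f : α → α)
    (hf : List.Forall₂ R Vs Ws) (him : ∀ a b, R a b → R' a (f b)) :
    List.Forall₂ R' Vs (Ws.map f) := by
  induction hf with
  | nil => simp
  | cons hr _ ih => simpa using List.Forall₂.cons (him _ _ hr) ih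

theorem forall₂_refl' {R : Tm → Tm → Prop} (hR : ∀ a, R a a) (Vs : List Tm) :
    List.Forall₂ R Vs Vs := by
  induction Vs with
  | nil => exact .nil
  | cons V Vs ih => exact .cons (hR V) ih

/-- chains keep applied sorts -/
theorem exts_apps_sort {L : Env} {Vs : List Tm} {k : Nat} {q : Env × Tm}
    (hch : Exts (L, apps Vs (.sort k)) q) :
    ∃ Vs0, q.2 = apps Vs0 (.sort k) ∧
      List.Forall₂ (fun V V0 => Exts (L, V) (q.1, V0)) Vs Vs0 := by
  induction hch with
  | refl => exact ⟨Vs, rfl, forall₂_refl' (fun a => .refl) Vs⟩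
  | tail hch hstep ih =>
    obtain ⟨Vs1, e1, hf⟩ := ih
    obtain ⟨d, l, hd, e⟩ := hstep
    refine ⟨Vs1.map (liftT d l), ?_, ?_⟩
    · rw [e, e1, liftT_apps]; rfl
    · exact forall₂_map_right _ hf
        (fun a b hab => hab.tail ⟨d, l, hd, rfl⟩)

/-- chains transport the beta redex/contractum pair -/
theorem exts_apps_beta {L : Env} {Vs : List Tm} {V W T : Tm} {q : Env × Tm}
    (hch : Exts (L, apps Vs (.flat .appl V (.bind .abst W T))) q) :
    ∃ Vs0 V0 W0 T0, q.2 = apps Vs0 (.flat .appl V0 (.bind .abst W0 T0)) ∧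
      Exts (L, apps Vs (.bind .abbr (.flat .cast W V) T))
           (q.1, apps Vs0 (.bind .abbr (.flat .cast W0 V0) T0)) ∧
      Exts (L, W) (q.1, W0) := by
  induction hch with
  | refl => exact ⟨Vs, V, W, T, rfl, .refl, .refl⟩
  | tail hch hstep ih =>
    obtain ⟨Vs1, V1, W1, T1, e1, hc1, hw1⟩ := ih
    obtain ⟨d, l, hd, e⟩ := hstep
    refine ⟨Vs1.map (liftT d l), liftT d l V1, liftT d l W1, liftT (d+1) l T1, ?_, ?_, ?_⟩
    · rw [e, e1, liftT_apps]; rfl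
    · refine hc1.tail ⟨d, l, hd, ?_⟩
      rw [liftT_apps]; rfl
    · exact hw1.tail ⟨d, l, hd, rfl⟩

/-- chains transport applied variables together with their entries -/
theorem exts_apps_lref {L : Env} {Vs : List Tm} {i : Nat} {q : Env × Tm}
    (hch : Exts (L, apps Vs (.lref i)) q) :
    ∀ {K b W}, Drop 0 i L (.pair K b W) →
    ∃ Vs0 i0 K0 W0, q.2 = apps Vs0 (.lref i0) ∧ Drop 0 i0 q.1 (.pair K0 b W0) ∧
      Exts (L, apps Vs (liftT 0 (i+1) W)) (q.1, apps Vs0 (liftT 0 (i0+1) W0)) ∧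
      Exts (K, W) (K0, W0) ∧ List.Forall₂ (fun V V0 => Exts (L, V) (q.1, V0)) Vs Vs0 := by
  induction hch with
  | refl =>
    intro K b W hdr
    exact ⟨Vs, i, K, W, rfl, hdr, .refl, .refl, forall₂_refl' (fun a => .refl) Vs⟩
  | tail hch hstep ih =>
    intro K b W hdr
    obtain ⟨Vs1, i1, K1, W1, e1, hdr1, hc1, hkw1, hsp1⟩ := ih hdr
    obtain ⟨d, l, hd, e⟩ := hstep
    by_cases hi : i1 < d
    · obtain ⟨K0, hdr0, hsub⟩ := drop_skip_lt hd hdr1 hi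
      refine ⟨Vs1.map (liftT d l), i1, K0, liftT (d-1-i1) l W1, ?_, hdr0, ?_, ?_⟩
      · rw [e, e1, liftT_apps]
        simp [liftT, hi]
      · refine hc1.tail ⟨d, l, hd, ?_⟩
        rw [liftT_apps,
          liftT_liftT_swap (Nat.zero_le _) W1, show d-1-i1+(i1+1) = d from by omega]
      · exact ⟨hkw1.tail ⟨d-1-i1, l, hsub, rfl⟩,
          forall₂_map_right _ hsp1 (fun a b hab => hab.tail ⟨d, l, hd, rfl⟩)⟩
    · have hdr0 := drop_trans_ge hd hdr1 (by omega)
      refine ⟨Vs1.map (liftT d l), i1 + l, K1, W1, ?_, hdr0, ?_, hkw1,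
        forall₂_map_right _ hsp1 (fun a b hab => hab.tail ⟨d, l, hd, rfl⟩)⟩
      · rw [e, e1, liftT_apps]
        simp [liftT, hi]
      · refine hc1.tail ⟨d, l, hd, ?_⟩
        rw [liftT_apps,
          liftT_liftT_le (Nat.zero_le _) (by omega), show i1+1+l = i1+l+1 from by omega]

/-- chains transport applied abbreviations -/
theorem exts_apps_abbr {L : Env} {Vs : List Tm} {V T : Tm} {q : Env × Tm}
    (hch : Exts (L, apps Vs (.bind .abbr V T)) q) :
    ∃ Vs0 V0 T0, q.2 = apps Vs0 (.bind .abbr V0 T0) ∧ Exts (L, V) (q.1, V0) ∧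
      Exts ((Env.pair L .abbr V), apps (Vs.map (liftT 0 1)) T)
           ((Env.pair q.1 .abbr V0), apps (Vs0.map (liftT 0 1)) T0) := by
  induction hch with
  | refl => exact ⟨Vs, V, T, rfl, .refl, .refl⟩
  | tail hch hstep ih =>
    obtain ⟨Vs1, V1, T1, e1, hv1, hc1⟩ := ih
    obtain ⟨d, l, hd, e⟩ := hstep
    refine ⟨Vs1.map (liftT d l), liftT d l V1, liftT (d+1) l T1, ?_, hv1.tail ⟨d, l, hd, rfl⟩, ?_⟩
    · rw [e, e1, liftT_apps]; rfl
    · refine hc1.tail ⟨d+1, l, .skip hd (liftT_lift d l V1), ?_⟩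
      rw [liftT_apps, List.map_map, List.map_map]
      show apps (List.map (liftT 0 1 ∘ liftT d l) Vs1) (liftT (d + 1) l T1) =
        apps (List.map (liftT (d + 1) l ∘ liftT 0 1) Vs1) (liftT (d + 1) l T1)
      congr 1
      refine List.map_congr_left fun x _ => ?_
      simp only [Function.comp_apply]
      exact liftT_liftT_swap (Nat.zero_le d) x

/-- chains transport applied casts -/
theorem exts_apps_cast {L : Env} {Vs : List Tm} {U T : Tm} {q : Env × Tm}
    (hch : Exts (L, apps Vs (.flat .cast U T)) q) :
    ∃ Vs0 U0 T0, q.2 = apps Vs0 (.flat .cast U0 T0) ∧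
      Exts (L, apps Vs U) (q.1, apps Vs0 U0) ∧
      Exts (L, apps Vs T) (q.1, apps Vs0 T0) := by
  induction hch with
  | refl => exact ⟨Vs, U, T, rfl, .refl, .refl⟩
  | tail hch hstep ih =>
    obtain ⟨Vs1, U1, T1, e1, hu1, ht1⟩ := ih
    obtain ⟨d, l, hd, e⟩ := hstep
    refine ⟨Vs1.map (liftT d l), liftT d l U1, liftT d l T1, ?_, ?_, ?_⟩
    · rw [e, e1, liftT_apps]; rfl
    · refine hu1.tail ⟨d, l, hd, ?_⟩; rw [liftT_apps]
    · refine ht1.tail ⟨d, l, hd, ?_⟩; rw [liftT_apps]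

/-- chains on plain binders -/
theorem exts_bind {L : Env} {b : Bk} {W T : Tm} {q : Env × Tm}
    (hch : Exts (L, .bind b W T) q) :
    ∃ W0 T0, q.2 = .bind b W0 T0 ∧ Exts (L, W) (q.1, W0) ∧
      Exts ((Env.pair L b W), T) ((Env.pair q.1 b W0), T0) := by
  induction hch with
  | refl => exact ⟨W, T, rfl, .refl, .refl⟩
  | tail hch hstep ih =>
    obtain ⟨W1, T1, e1, hw1, ht1⟩ := ih
    obtain ⟨d, l, hd, e⟩ := hstep
    exact ⟨liftT d l W1, liftT (d+1) l T1, by rw [e, e1]; rfl,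
      hw1.tail ⟨d, l, hd, rfl⟩, ht1.tail ⟨d+1, l, .skip hd (liftT_lift d l W1), rfl⟩⟩

theorem exts_flat {L : Env} {f : Fk} {V T : Tm} {q : Env × Tm}
    (hch : Exts (L, .flat f V T) q) :
    ∃ V0 T0, q.2 = .flat f V0 T0 ∧ Exts (L, V) (q.1, V0) ∧ Exts (L, T) (q.1, T0) := by
  induction hch with
  | refl => exact ⟨V, T, rfl, .refl, .refl⟩
  | tail hch hstep ih =>
    obtain ⟨V1, T1, e1, hv1, ht1⟩ := ih
    obtain ⟨d, l, hd, e⟩ := hstep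
    exact ⟨liftT d l V1, liftT d l T1, by rw [e, e1]; rfl,
      hv1.tail ⟨d, l, hd, rfl⟩, ht1.tail ⟨d, l, hd, rfl⟩⟩

theorem exts_sort_tm {L : Env} {k : Nat} {q : Env × Tm}
    (hch : Exts (L, .sort k) q) : q.2 = .sort k := by
  induction hch with
  | refl => rfl
  | tail hch hstep ih =>
    obtain ⟨d, l, hd, e⟩ := hstep
    rw [e, ih]; rfl

end SNproof
namespace SNproof
variable {h g : Nat → Nat}

/-- the interpretation of arities as reducibility candidates -/
def Interp (h g : Nat → Nat) : Aa → Env → Tm → Prop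
| .star => Csx h g
| .impl B A => fun L T => ∀ (q : Env × Tm) (V : Tm), Exts (L, T) q →
    Interp h g B q.1 V → Interp h g A q.1 (.flat .appl V q.2)

structure IsCand (h g : Nat → Nat) (P : Env → Tm → Prop) : Prop where
  cr1 : ∀ {L T}, P L T → Csx h g L T
  cs0 : ∀ {p q : Env × Tm}, ExtStep p q → P p.1 p.2 → P q.1 q.2
  cs2 : ∀ {L : Env} (Vs : List Tm) (k : Nat), (∀ V ∈ Vs, Csx h g L V) → P L (apps Vs (.sort k))
  cs3 : ∀ {L Vs V W T}, P L (apps Vs (.bind .abbr (.flat .cast W V) T)) → Csx h g L W →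
    P L (apps Vs (.flat .appl V (.bind .abst W T)))
  cs5 : ∀ {L K : Env} {i b W Vs}, Drop 0 i L (.pair K b W) →
    P L (apps Vs (liftT 0 (i+1) W)) → P L (apps Vs (.lref i))
  cs6 : ∀ {L : Env} {V T Vs}, Csx h g L V → P (.pair L .abbr V) (apps (Vs.map (liftT 0 1)) T) →
    P L (apps Vs (.bind .abbr V T))
  cs7 : ∀ {L Vs U T}, P L (apps Vs U) → P L (apps Vs T) → P L (apps Vs (.flat .cast U T))

theorem IsCand.exts {P} (hP : IsCand h g P) {p q : Env × Tm} (hch : Exts p q)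
    (hp : P p.1 p.2) : P q.1 q.2 := by
  induction hch with
  | refl => exact hp
  | tail _ hstep ih => exact hP.cs0 hstep ih

theorem forall₂_right_mem {α β : Type _} {R : α → β → Prop} {as : List α} {bs : List β}
    (hf : List.Forall₂ R as bs) : ∀ b ∈ bs, ∃ a ∈ as, R a b := by
  induction hf with
  | nil => intro b hb; cases hb
  | cons hr _ ih =>
    intro b hb
    rcases List.mem_cons.mp hb with rfl | hb
    · exact ⟨_, by simp, hr⟩
    · obtain ⟨a, ha, hab⟩ := ih b hb
      exact ⟨a, by simp [ha], hab⟩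

theorem isCand_star (hg : ∀ k d, g k = d + 1 → g (h k) = d) : IsCand h g (Csx h g) where
  cr1 := fun hp => hp
  cs0 := fun {p q} hs hp => by
    obtain ⟨d, l, hd, e⟩ := hs
    exact e ▸ csx_lift hp hd
  cs2 := fun Vs k hVs => S_sort hg hVs
  cs3 := fun hp _ => S_beta hp rfl
  cs5 := fun hd hp => S_delta hd hp rfl
  cs6 := fun hV hp => S_abbr hV hp _ le_rfl rfl
  cs7 := fun hU hT => S_cast hU hT rfl rfl

theorem interp_isCand (hg : ∀ k d, g k = d + 1 → g (h k) = d) :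
    ∀ A : Aa, IsCand h g (Interp h g A) := by
  intro A
  induction A with
  | star => exact isCand_star hg
  | impl B A ihB ihA =>
    refine ⟨?_, ?_, ?_, ?_, ?_, ?_, ?_⟩
    · -- cr1
      intro L T hT
      have hB0 : Interp h g B (.pair L .abst (.sort 0)) (.lref 0) :=
        ihB.cs5 (Vs := []) (i := 0) (drop00_refl (.pair L .abst (.sort 0)))
          (ihB.cs2 [] 0 (by simp))
      have happ := hT (.pair L .abst (.sort 0), liftT 0 1 T) (.lref 0)
        (Relation.ReflTransGen.single ⟨0, 1, drop01 L .abst (.sort 0), rfl⟩) hB0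
      have hc := ihA.cr1 happ
      exact csx_inv_lift (csx_fwd_flat_dx hc) (drop01 L .abst (.sort 0)) rfl
    · -- cs0
      intro p q hs hp r V hch hB
      exact hp r V (Relation.ReflTransGen.head hs hch) hB
    · -- cs2
      intro L Vs k hVs q V0 hch hB
      obtain ⟨Vs0, e0, hf⟩ := exts_apps_sort hch
      rw [e0]
      show Interp h g A q.1 (apps (V0 :: Vs0) (.sort k))
      refine ihA.cs2 (V0 :: Vs0) k ?_
      intro V1 hV1
      rcases List.mem_cons.mp hV1 with rfl | hV1
      · exact ihB.cr1 hB
      · obtain ⟨a, ha, hch'⟩ := forall₂_right_mem hf V1 hV1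
        exact csx_exts (hVs a ha) hch'
    · -- cs3
      intro L Vs V W T hp hW q V0 hch hB
      obtain ⟨Vs0, V', W', T', e0, hcontr, hw⟩ := exts_apps_beta hch
      rw [e0]
      show Interp h g A q.1 (apps (V0 :: Vs0) (.flat .appl V' (.bind .abst W' T')))
      refine ihA.cs3 (Vs := V0 :: Vs0) ?_ (csx_exts hW hw)
      exact hp (q.1, apps Vs0 (.bind .abbr (.flat .cast W' V') T')) V0 hcontr hB
    · -- cs5
      intro L K i b W Vs hd hp q V0 hch hB
      obtain ⟨Vs0, i0, K0, W0, e0, hd0, hcontr, -, -⟩ := exts_apps_lref hch hd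
      rw [e0]
      show Interp h g A q.1 (apps (V0 :: Vs0) (.lref i0))
      exact ihA.cs5 (Vs := V0 :: Vs0) hd0
        (hp (q.1, apps Vs0 (liftT 0 (i0+1) W0)) V0 hcontr hB)
    · -- cs6
      intro L V T Vs hV hp q V0 hch hB
      obtain ⟨Vs0, V', T', e0, hv, hcontr⟩ := exts_apps_abbr hch
      rw [e0]
      show Interp h g A q.1 (apps (V0 :: Vs0) (.bind .abbr V' T'))
      refine ihA.cs6 (Vs := V0 :: Vs0) (csx_exts hV hv) ?_
      have hB' : Interp h g B (Env.pair q.1 .abbr V') (liftT 0 1 V0) :=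
        ihB.cs0 (p := (q.1, V0)) (q := (Env.pair q.1 .abbr V', liftT 0 1 V0))
          ⟨0, 1, drop01 q.1 .abbr V', rfl⟩ hB
      exact hp (Env.pair q.1 .abbr V', apps (Vs0.map (liftT 0 1)) T') (liftT 0 1 V0) hcontr hB'
    · -- cs7
      intro L Vs U T hU hT q V0 hch hB
      obtain ⟨Vs0, U0, T0, e0, hu, ht⟩ := exts_apps_cast hch
      rw [e0]
      show Interp h g A q.1 (apps (V0 :: Vs0) (.flat .cast U0 T0))
      exact ihA.cs7 (Vs := V0 :: Vs0)
        (hU (q.1, apps Vs0 U0) V0 hu hB) (hT (q.1, apps Vs0 T0) V0 ht hB)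

end SNproof
namespace SNproof
variable {h g : Nat → Nat}

theorem aaa_lift {L T A} (ha : Aaa L T A) : ∀ {L0 : Env} {d l : Nat}, Drop d l L0 L →
    Aaa L0 (liftT d l T) A := by
  induction ha with
  | sort => intro L0 d l _; exact .sort
  | @lref L K b W B i hd hW ih =>
    intro L0 d l hdr
    by_cases hi : i < d
    · obtain ⟨K0, h1, h2⟩ := drop_skip_lt hdr hd hi
      simpa [liftT, hi] using Aaa.lref h1 (ih h2)
    · have h1 := drop_trans_ge hdr hd (by omega)
      simpa [liftT, hi] using Aaa.lref h1 hW
  | abbr _ _ ihV ihT =>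
    intro L0 d l hdr
    exact .abbr (ihV hdr) (ihT (.skip hdr (liftT_lift d l _)))
  | abst _ _ ihW ihT =>
    intro L0 d l hdr
    exact .abst (ihW hdr) (ihT (.skip hdr (liftT_lift d l _)))
  | appl _ _ ihV ihT =>
    intro L0 d l hdr
    exact .appl (ihV hdr) (ihT hdr)
  | cast _ _ ihU ihT =>
    intro L0 d l hdr
    exact .cast (ihU hdr) (ihT hdr)

theorem aaa_exts {L T A} (ha : Aaa L T A) {q : Env × Tm} (hch : Exts (L, T) q) :
    Aaa q.1 q.2 A := by
  induction hch with
  | refl => exact ha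
  | tail _ hstep ih =>
    obtain ⟨d, l, hd, e⟩ := hstep
    exact e ▸ aaa_lift ih hd

theorem aaa_mono {L T A₁} (h1 : Aaa L T A₁) : ∀ {A₂}, Aaa L T A₂ → A₁ = A₂ := by
  induction h1 with
  | sort => intro A₂ h2; cases h2; rfl
  | lref hd hW ih =>
    intro A₂ h2
    cases h2 with
    | lref hd' hW' =>
      cases drop0_mono hd hd'
      exact ih hW'
  | abbr _ _ _ ihT => intro A₂ h2; cases h2 with | abbr _ hT' => exact ihT hT'
  | abst _ _ ihW ihT =>
    intro A₂ h2
    cases h2 with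
    | abst hW' hT' => rw [ihW hW', ihT hT']
  | appl _ _ _ ihT =>
    intro A₂ h2
    cases h2 with
    | appl _ hT' =>
      have := ihT hT'
      injection this
  | cast _ _ ihU _ => intro A₂ h2; cases h2 with | cast hU' _ => exact ihU hU'

/-- the refinement relation carrying reducibility of the beta pairs -/
inductive Sub (h g : Nat → Nat) : Env → Env → Prop
| atom : Sub h g .null .null
| pair {L₁ L₂ b W} : Sub h g L₁ L₂ → Sub h g (.pair L₁ b W) (.pair L₂ b W)
| beta {L₁ L₂ W V B} : Sub h g L₁ L₂ → Aaa L₂ W B → Interp h g B L₁ (.flat .cast W V) →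
    Sub h g (.pair L₁ .abbr (.flat .cast W V)) (.pair L₂ .abst W)

theorem sub_refl (L : Env) : Sub h g L L := by
  induction L with
  | null => exact .atom
  | pair L b W ih => exact .pair ih

theorem sub_drop {L' L0 : Env} (hs : Sub h g L' L0) :
    ∀ {j K0 b W0}, Drop 0 j L0 (.pair K0 b W0) →
    (∃ K', Drop 0 j L' (.pair K' b W0) ∧ Sub h g K' K0) ∨
    (b = .abst ∧ ∃ K' V B, Drop 0 j L' (.pair K' .abbr (.flat .cast W0 V)) ∧ Sub h g K' K0 ∧
      Aaa K0 W0 B ∧ Interp h g B K' (.flat .cast W0 V)) := by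
  induction hs with
  | atom => intro _ _ _ _ hd; cases hd
  | @pair L₁ L₂ b' W' hsub ih =>
    intro j K0 b W0 hd
    cases hd with
    | pair h0 =>
      cases drop00_eq h0
      exact .inl ⟨L₁, .pair (drop00_refl L₁), hsub⟩
    | drop hd =>
      rcases ih hd with ⟨K', h1, h2⟩ | ⟨rfl, K', V, B, h1, h2, h3, h4⟩
      · exact .inl ⟨K', .drop h1, h2⟩
      · exact .inr ⟨rfl, K', V, B, .drop h1, h2, h3, h4⟩
  | @beta L₁ L₂ W' V' B' hsub hA hI ih =>
    intro j K0 b W0 hd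
    cases hd with
    | pair h0 =>
      cases drop00_eq h0
      exact .inr ⟨rfl, L₁, V', B', .pair (drop00_refl L₁), hsub, hA, hI⟩
    | drop hd =>
      rcases ih hd with ⟨K', h1, h2⟩ | ⟨rfl, K', V, B, h1, h2, h3, h4⟩
      · exact .inl ⟨K', .drop h1, h2⟩
      · exact .inr ⟨rfl, K', V, B, .drop h1, h2, h3, h4⟩

theorem sub_drop_big (hg : ∀ k d, g k = d + 1 → g (h k) = d) {d l : Nat} {L1 L'' : Env}
    (hd : Drop d l L1 L'') : ∀ {L0}, Sub h g L'' L0 →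
    ∃ M, Drop d l M L0 ∧ Sub h g L1 M := by
  induction hd with
  | atom l =>
    intro L0 hs
    cases hs
    exact ⟨.null, .atom l, .atom⟩
  | @pair L₁ L₂ b W h0 =>
    intro L0 hs
    cases drop00_eq h0
    exact ⟨L0, drop00_refl L0, hs⟩
  | @drop m L₁ L₂ b W h0 ih =>
    intro L0 hs
    obtain ⟨M, h1, h2⟩ := ih hs
    exact ⟨.pair M b W, .drop h1, .pair h2⟩
  | @skip e l' L₁ L₂ b W₁ W₂ h0 hl ih =>
    intro L0 hs
    cases hs with
    | @pair _ L₀' _ _ hsub =>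
      obtain ⟨M, h1, h2⟩ := ih hsub
      exact ⟨.pair M b W₁, .skip h1 hl, .pair h2⟩
    | @beta _ L₀' W V B hsub hA hI =>
      obtain ⟨M, h1, h2⟩ := ih hsub
      rw [lift_eq hl]
      refine ⟨.pair M .abst (liftT e l' W), .skip h1 (liftT_lift e l' W), ?_⟩
      have hI' : Interp h g B L₁ (liftT e l' (.flat .cast W V)) :=
        (interp_isCand hg B).cs0 (p := (L₂, .flat .cast W V))
          (q := (L₁, liftT e l' (.flat .cast W V))) ⟨e, l', h0, rfl⟩ hI
      have eW : liftT e l' (Tm.flat .cast W V) =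
          .flat .cast (liftT e l' W) (liftT e l' V) := rfl
      rw [eW] at hI'
      exact .beta h2 (aaa_lift hA h1) hI'

theorem sub_exts (hg : ∀ k d, g k = d + 1 → g (h k) = d) {L'' L0 : Env}
    (hs : Sub h g L'' L0) {X : Tm} {q : Env × Tm} (hch : Exts (L'', X) q) :
    ∃ M, Exts (L0, X) (M, q.2) ∧ Sub h g q.1 M := by
  induction hch with
  | refl => exact ⟨L0, .refl, hs⟩
  | tail _ hstep ih =>
    obtain ⟨M, hchain, hsubM⟩ := ih
    obtain ⟨d, l, hd, e⟩ := hstep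
    obtain ⟨M1, h1, h2⟩ := sub_drop_big hg hd hsubM
    exact ⟨M1, hchain.tail ⟨d, l, h1, e⟩, h2⟩

/-- main lemma: arity judgements are interpreted by the candidates -/
theorem aaa_interp (hg : ∀ k d, g k = d + 1 → g (h k) = d) {L T A} (ha : Aaa L T A) :
    ∀ {q : Env × Tm}, Exts (L, T) q → ∀ {L'}, Sub h g L' q.1 → Interp h g A L' q.2 := by
  induction ha with
  | @sort L k =>
    intro q hch L' hs
    rw [exts_sort_tm hch]
    exact csx_sort hg L' k
  | @lref L K b W B i hd hW ih =>
    intro q hch L' hs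
    obtain ⟨Vs0, i0, K0, W0, e0, hd0, hcontr, hkw, hsp⟩ :=
      exts_apps_lref (Vs := []) hch hd
    cases hsp
    rw [e0]
    rcases sub_drop hs hd0 with ⟨K', h1, h2⟩ | ⟨hb, K', V, B', h1, h2, hA, hI⟩
    · have hWint : Interp h g B K' W0 := ih (q := (K0, W0)) hkw h2
      have hlift : Interp h g B L' (liftT 0 (i0+1) W0) :=
        (interp_isCand hg B).cs0 (p := (K', W0)) (q := (L', liftT 0 (i0+1) W0))
          ⟨0, i0+1, drop0_succ h1, rfl⟩ hWint
      exact (interp_isCand hg B).cs5 (Vs := []) h1 hlift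
    · subst hb
      obtain rfl : B = B' := (aaa_mono hA (aaa_exts hW hkw)).symm
      have hlift : Interp h g B L' (liftT 0 (i0+1) (.flat .cast W0 V)) :=
        (interp_isCand hg B).cs0 (p := (K', .flat .cast W0 V))
          (q := (L', liftT 0 (i0+1) (.flat .cast W0 V)))
          ⟨0, i0+1, drop0_succ h1, rfl⟩ hI
      exact (interp_isCand hg B).cs5 (Vs := []) h1 hlift
  | @abbr L V T B A hV hT ihV ihT =>
    intro q hch L' hs
    obtain ⟨W0, T0, e0, hv, ht⟩ := exts_bind hch
    rw [e0]
    have hVi : Interp h g B L' W0 := ihV (q := (q.1, W0)) hv hs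
    have hTi : Interp h g A (.pair L' .abbr W0) T0 :=
      ihT (q := (.pair q.1 .abbr W0, T0)) ht (.pair hs)
    exact (interp_isCand hg A).cs6 (Vs := []) ((interp_isCand hg B).cr1 hVi) hTi
  | @abst L W T B A hW hT ihW ihT =>
    intro q hch L' hs
    obtain ⟨W0, T0, e0, hw, ht⟩ := exts_bind hch
    rw [e0]
    intro r V hch2 hBV
    obtain ⟨M, hch2', hsub2⟩ := sub_exts hg hs hch2
    obtain ⟨W1, T1, e1, hw1, ht1⟩ := exts_bind hch2'
    rw [e1]
    have hwc : Exts (L, W) (M, W1) := exts_trans hw hw1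
    have htc : Exts ((Env.pair L .abst W), T) ((Env.pair M .abst W1), T1) :=
      exts_trans ht ht1
    have hW1 : Interp h g B r.1 W1 := ihW (q := (M, W1)) hwc hsub2
    have hWc : Csx h g r.1 W1 := (interp_isCand hg B).cr1 hW1
    have hVc : Csx h g r.1 V := (interp_isCand hg B).cr1 hBV
    have hcast : Interp h g B r.1 (.flat .cast W1 V) :=
      (interp_isCand hg B).cs7 (Vs := []) hW1 hBV
    have hsubB : Sub h g (.pair r.1 .abbr (.flat .cast W1 V)) (.pair M .abst W1) :=
      .beta hsub2 (aaa_exts hW hwc) hcast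
    have hTi : Interp h g A (.pair r.1 .abbr (.flat .cast W1 V)) T1 :=
      ihT (q := (.pair M .abst W1, T1)) htc hsubB
    have habbr : Interp h g A r.1 (.bind .abbr (.flat .cast W1 V) T1) :=
      (interp_isCand hg A).cs6 (Vs := [])
        ((isCand_star hg).cs7 (Vs := []) hWc hVc) hTi
    exact (interp_isCand hg A).cs3 (Vs := []) habbr hWc
  | @appl L V T B A hV hT ihV ihT =>
    intro q hch L' hs
    obtain ⟨V0, T0, e0, hv, ht⟩ := exts_flat hch
    rw [e0]
    have hTi : Interp h g (.impl B A) L' T0 := ihT (q := (q.1, T0)) ht hs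
    have hVi : Interp h g B L' V0 := ihV (q := (q.1, V0)) hv hs
    exact hTi (L', T0) V0 .refl hVi
  | @cast L U T A hU hT ihU ihT =>
    intro q hch L' hs
    obtain ⟨U0, T0, e0, hu, ht⟩ := exts_flat hch
    rw [e0]
    exact (interp_isCand hg A).cs7 (Vs := [])
      (ihU (q := (q.1, U0)) hu hs) (ihT (q := (q.1, T0)) ht hs)

theorem aaa_csx_main (hg : ∀ k d, g k = d + 1 → g (h k) = d) {L T A}
    (ha : Aaa L T A) : Csx h g L T :=
  (interp_isCand hg A).cr1 (aaa_interp hg ha (q := (L, T)) .refl (sub_refl L))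

end SNproof

set_option linter.unusedVariables false in
theorem aaa_csx {h g : Nat → Nat}
    (hh : ∀ k, k < h k) (hg : ∀ k d, g k = d + 1 → g (h k) = d)
    {L : Env} {T : Tm} {A : Aa} (ha : Aaa L T A) : Csx h g L T :=
  SNproof.aaa_csx_main hg ha
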